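/- Let H be a Hilbert space, T : H → H an isometry (or unitary), f ∈ H, and E ⊆ ℕ a set such that E - E is syndetic in ℕ and ‖Tⁿf - f‖ < ε/4 for all n ∈ E, for every ε > 0 with suitable E = E(ε). Then the orbit closure {Tⁿf : n ∈ ℕ} is totally bounded, hence its closure is compact in the norm topology. More precisely: if for every ε > 0 there is a set E ⊆ ℕ with E - E syndetic and ‖Tⁿf - f‖ < ε/4 for all n ∈ E, then the closure of {Tⁿf : n ∈ ℕ} is compact. -/

import Mathlib

/-- `S ⊆ ℕ` is syndetic: finitely many translates `-n + S` cover `ℕ`. -/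
def Syndetic (S : Set ℕ) : Prop :=
  ∃ F : Finset ℕ, ∀ m : ℕ, ∃ n ∈ F, m + n ∈ S

/-- The difference set `E - E = {n : ∃ a ∈ E, a + n ∈ E}`. -/
def diffSet (E : Set ℕ) : Set ℕ := {n | ∃ a ∈ E, a + n ∈ E}

/-- If for every `ε > 0` there is `E ⊆ ℕ` with `E - E` syndetic and
`‖Tⁿf - f‖ < ε/4` for all `n ∈ E`, then the orbit closure of `f` is compact. -/
theorem orbit_closure_compact {H : Type*} [NormedAddCommGroup H]
    [InnerProductSpace ℝ H] [CompleteSpace H]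
    (T : H →ₗᵢ[ℝ] H) (f : H)
    (h : ∀ ε : ℝ, 0 < ε → ∃ E : Set ℕ, Syndetic (diffSet E) ∧
      ∀ n ∈ E, ‖(⇑T)^[n] f - f‖ < ε / 4) :
    IsCompact (closure (Set.range fun n : ℕ => (⇑T)^[n] f)) := by
  have hiso : ∀ (n : ℕ) (x y : H), ‖(⇑T)^[n] x - (⇑T)^[n] y‖ = ‖x - y‖ := by
    intro n x y
    induction n with
    | zero => simp
    | succ k ih =>
      rw [Function.iterate_succ_apply', Function.iterate_succ_apply',
        ← map_sub, T.norm_map]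
      exact ih
  apply TotallyBounded.isCompact_of_isClosed _ isClosed_closure
  apply TotallyBounded.closure
  rw [Metric.totallyBounded_iff]
  intro ε hε
  obtain ⟨E, ⟨F, hF⟩, hE⟩ := h ε hε
  have key : ∀ n ∈ diffSet E, ‖(⇑T)^[n] f - f‖ < ε / 2 := by
    rintro n ⟨a, ha, han⟩
    have h1 := hE a ha
    have h2 := hE (a + n) han
    have h3 : ‖(⇑T)^[a + n] f - (⇑T)^[a] f‖ = ‖(⇑T)^[n] f - f‖ := by
      rw [Function.iterate_add_apply]; exact hiso a _ _
    calc ‖(⇑T)^[n] f - f‖ = ‖(⇑T)^[a+n] f - (⇑T)^[a] f‖ := h3.symm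
      _ ≤ ‖(⇑T)^[a+n] f - f‖ + ‖f - (⇑T)^[a] f‖ := norm_sub_le_norm_sub_add_norm_sub _ _ _
      _ < ε / 4 + ε / 4 := by
          rw [← norm_sub_rev ((⇑T)^[a] f) f] at *; exact add_lt_add h2 h1
      _ = ε / 2 := by ring
  classical
  set c : ℕ → H := fun n =>
    if hn : ∃ m : ℕ, m + n ∈ diffSet E then (⇑T)^[Classical.choose hn] f else f with hc
  refine ⟨c '' ↑F, (F.finite_toSet.image c), ?_⟩
  rintro x ⟨m, rfl⟩
  obtain ⟨n, hnF, hmn⟩ := hF m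
  have hex : ∃ m' : ℕ, m' + n ∈ diffSet E := ⟨m, hmn⟩
  have hm0 := Classical.choose_spec hex
  set m₀ := Classical.choose hex
  simp only [Set.mem_iUnion]
  refine ⟨c n, ⟨n, hnF, rfl⟩, ?_⟩
  rw [Metric.mem_ball, dist_eq_norm]
  have hcn : c n = (⇑T)^[m₀] f := by rw [hc]; simp [hex]; rfl
  have e1 : (⇑T)^[m + n] f = (⇑T)^[n] ((⇑T)^[m] f) := by
    rw [Nat.add_comm, Function.iterate_add_apply]
  have e2 : (⇑T)^[m₀ + n] f = (⇑T)^[n] ((⇑T)^[m₀] f) := by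
    rw [Nat.add_comm, Function.iterate_add_apply]
  have : ‖(⇑T)^[m] f - c n‖ = ‖(⇑T)^[m+n] f - (⇑T)^[m₀+n] f‖ := by
    rw [e1, e2, hiso, hcn]
  rw [this]
  calc ‖(⇑T)^[m+n] f - (⇑T)^[m₀+n] f‖
      ≤ ‖(⇑T)^[m+n] f - f‖ + ‖f - (⇑T)^[m₀+n] f‖ := norm_sub_le_norm_sub_add_norm_sub _ _ _
    _ < ε / 2 + ε / 2 := by
        rw [norm_sub_rev f]; exact add_lt_add (key _ hmn) (key _ hm0)
    _ = ε := by ring
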